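/- arXiv:1203.6807 — 3 statements merged into one kernel-verified Lean document; each statement's English description precedes it below -/
import Mathlib

section
/- The number of saturated chains of length 2 in the Dyck lattice D_n equals the sum over all Dyck paths γ of semilength n of: 2·(number of unordered pairs of disjoint occurrences of the factor du in γ) + (number of occurrences of the factor ddu in γ) + (number of occurrences of the factor duu in γ). -/
/-- Height of the path after `i` steps: `true` = up, `false` = down. -/
def heights (w : List Bool) (i : ℕ) : ℤ :=
  ((w.take i).count true : ℤ) - ((w.take i).count false : ℤ)

/-- `w` is a Dyck word. -/
def IsDyck (w : List Bool) : Prop :=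
  w.count true = w.count false ∧ ∀ i ≤ w.length, 0 ≤ heights w i

instance : DecidablePred IsDyck := fun w => by unfold IsDyck; infer_instance

/-- Dyck paths of semilength `n`. -/
def DyckPath (n : ℕ) := {v : List.Vector Bool (2 * n) // IsDyck v.1}

instance (n : ℕ) : Fintype (DyckPath n) := Subtype.fintype _

/-- The containment order on Dyck paths: `γ` lies weakly below `γ'`. -/
def DyckLE {n : ℕ} (γ γ' : DyckPath n) : Prop := ∀ i, heights γ.1.1 i ≤ heights γ'.1.1 i

def DyckLT {n : ℕ} (γ γ' : DyckPath n) : Prop := DyckLE γ γ' ∧ γ ≠ γ'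

def DyckCovBy {n : ℕ} (γ γ' : DyckPath n) : Prop :=
  DyckLT γ γ' ∧ ∀ δ : DyckPath n, DyckLT γ δ → ¬ DyckLT δ γ'

/-- Number of occurrences of the factor `f` in `w`. -/
def occ (f w : List Bool) : ℕ :=
  ((Finset.range w.length).filter fun i => f <+: w.drop i).card

/-- Saturated chains of length `h` in the Dyck lattice of order `n`. -/
def SatChain (n h : ℕ) :=
  {c : Fin (h + 1) → DyckPath n // ∀ i : Fin h, DyckCovBy (c i.castSucc) (c i.succ)}

/-- Number of unordered pairs of disjoint occurrences of the valley factor `du` in `w`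
(counted as pairs of positions `i < j` with `j ≥ i + 2`). -/
def valleyPairs (w : List Bool) : ℕ :=
  ((Finset.range w.length ×ˢ Finset.range w.length).filter fun p =>
    p.1 + 2 ≤ p.2 ∧ [false, true] <+: w.drop p.1 ∧ [false, true] <+: w.drop p.2).card

lemma pair_prefix_iff (l : List Bool) (a b : Bool) :
    [a, b] <+: l ↔ l[0]? = some a ∧ l[1]? = some b := by
  match l with
  | [] => simp [List.IsPrefix]
  | [x] => simp [List.IsPrefix]
  | x :: y :: t =>
    constructor
    · rintro ⟨s, h⟩
      simp at h
      simp [h.1, h.2.1]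
    · rintro ⟨h1, h2⟩
      simp at h1 h2
      exact ⟨t, by simp [h1, h2]⟩

lemma triple_prefix_iff (l : List Bool) (a b c : Bool) :
    [a, b, c] <+: l ↔ l[0]? = some a ∧ l[1]? = some b ∧ l[2]? = some c := by
  match l with
  | [] => simp [List.IsPrefix]
  | [x] => simp [List.IsPrefix]
  | [x, y] => simp [List.IsPrefix]
  | x :: y :: z :: t =>
    constructor
    · rintro ⟨s, h⟩
      simp at h
      simp [h.1, h.2.1, h.2.2.1]
    · rintro ⟨h1, h2, h3⟩
      simp at h1 h2 h3
      exact ⟨t, by simp [h1, h2, h3]⟩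

lemma pair_prefix_drop_iff (w : List Bool) (a b : Bool) (i : ℕ) :
    [a, b] <+: w.drop i ↔ w[i]? = some a ∧ w[i + 1]? = some b := by
  rw [pair_prefix_iff, List.getElem?_drop, List.getElem?_drop, Nat.add_zero]

lemma triple_prefix_drop_iff (w : List Bool) (a b c : Bool) (i : ℕ) :
    [a, b, c] <+: w.drop i ↔ w[i]? = some a ∧ w[i + 1]? = some b ∧ w[i + 2]? = some c := by
  rw [triple_prefix_iff, List.getElem?_drop, List.getElem?_drop, List.getElem?_drop, Nat.add_zero]

lemma lt_length_of_getElem? {w : List Bool} {i : ℕ} {a : Bool} (h : w[i]? = some a) :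
    i < w.length := by
  by_contra hc
  rw [List.getElem?_eq_none (by omega)] at h
  cases h

lemma heights_zero (w : List Bool) : heights w 0 = 0 := by simp [heights]

lemma heights_append (A B : List Bool) (i : ℕ) :
    heights (A ++ B) i = heights A i + heights B (i - A.length) := by
  unfold heights
  rw [List.take_append, List.count_append, List.count_append]
  push_cast
  ring

lemma count_true_add_count_false (l : List Bool) : l.count true + l.count false = l.length := by
  induction l with
  | nil => simp
  | cons a t ih => cases a <;> simp [List.count_cons] <;> omega

lemma heights_step {w : List Bool} {i : ℕ} {b : Bool} (h : w[i]? = some b) :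
    heights w (i + 1) = heights w i + (if b then 1 else -1) := by
  unfold heights
  rw [List.take_succ, h, List.count_append, List.count_append]
  cases b <;> simp <;> ring

lemma heights_of_length_le {w : List Bool} {i : ℕ} (h : w.length ≤ i) :
    heights w i = heights w w.length := by
  unfold heights
  rw [List.take_of_length_le h, List.take_length]

lemma heights_parity {w : List Bool} {i : ℕ} (h : i ≤ w.length) :
    heights w i = 2 * ((w.take i).count true : ℤ) - i := by
  unfold heights
  have := count_true_add_count_false (w.take i)
  rw [List.length_take] at this
  have : ((w.take i).count false : ℤ) = min i w.length - (w.take i).count true := by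
    push_cast [← this]; ring
  rw [this]
  have : min i w.length = i := by omega
  rw [this]; ring

lemma heights_ext {w₁ w₂ : List Bool} (hlen : w₁.length = w₂.length)
    (h : ∀ i, heights w₁ i = heights w₂ i) : w₁ = w₂ := by
  apply List.ext_getElem?
  intro i
  by_cases hi : i < w₁.length
  · obtain ⟨b₁, hb₁⟩ : ∃ b, w₁[i]? = some b := ⟨w₁[i], List.getElem?_eq_getElem hi⟩
    obtain ⟨b₂, hb₂⟩ : ∃ b, w₂[i]? = some b :=
      ⟨w₂[i]'(by omega), List.getElem?_eq_getElem (by omega)⟩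
    have s₁ := heights_step hb₁
    have s₂ := heights_step hb₂
    rw [h i, h (i+1), s₂] at s₁
    have : b₁ = b₂ := by cases b₁ <;> cases b₂ <;> simp_all <;> omega
    rw [hb₁, hb₂, this]
  · rw [List.getElem?_eq_none (by omega), List.getElem?_eq_none (by omega)]

def dflip (w : List Bool) (j : ℕ) : List Bool :=
  w.take j ++ true :: false :: w.drop (j + 2)

def Valley (w : List Bool) (j : ℕ) : Prop := w[j]? = some false ∧ w[j + 1]? = some true

lemma valley_decomp {w : List Bool} {j : ℕ} (h : Valley w j) :
    w = w.take j ++ false :: true :: w.drop (j + 2) := by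
  obtain ⟨h1, h2⟩ := h
  have hj1 : j + 1 < w.length := lt_length_of_getElem? h2
  have e1 : w.drop j = w[j] :: w.drop (j + 1) := List.drop_eq_getElem_cons (by omega)
  have e2 : w.drop (j+1) = w[j+1] :: w.drop (j + 2) := List.drop_eq_getElem_cons (by omega)
  have g1 : w[j] = false := by
    have := List.getElem?_eq_getElem (l := w) (i := j) (by omega)
    rw [h1] at this; exact (Option.some_inj.mp this).symm
  have g2 : w[j+1] = true := by
    have := List.getElem?_eq_getElem (l := w) (i := j+1) (by omega)
    rw [h2] at this; exact (Option.some_inj.mp this).symm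
  conv_lhs => rw [← List.take_append_drop j w, e1, e2, g1, g2]

lemma length_dflip {w : List Bool} {j : ℕ} (h : Valley w j) :
    (dflip w j).length = w.length := by
  conv_rhs => rw [valley_decomp h]
  simp [dflip]

lemma getElem?_dflip {w : List Bool} {j : ℕ} (h : Valley w j) (i : ℕ) :
    (dflip w j)[i]? = if i = j then some true else if i = j + 1 then some false else w[i]? := by
  have hj1 : j + 1 < w.length := lt_length_of_getElem? h.2
  have hlt : (w.take j).length = j := by simp; omega
  rw [dflip, List.getElem?_append]
  rw [hlt]
  by_cases h1 : i < j
  · rw [if_pos h1, if_neg (by omega), if_neg (by omega), List.getElem?_take_of_lt h1]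
  · rw [if_neg h1]
    by_cases h2 : i = j
    · subst h2; simp
    · by_cases h3 : i = j + 1
      · subst h3
        rw [if_neg h2, if_pos rfl, show j + 1 - j = 1 by omega]
        simp
      · rw [if_neg h2, if_neg h3]
        have e : (true :: false :: w.drop (j+2))[i-j]? = (w.drop (j+2))[i - j - 2]? := by
          rw [show i - j = (i - j - 2) + 2 by omega]
          simp
        rw [e, List.getElem?_drop]
        congr 1
        omega

lemma heights_cons (a : Bool) (l : List Bool) (k : ℕ) :
    heights (a :: l) k = if k = 0 then 0 else (if a then 1 else -1) + heights l (k - 1) := by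
  cases k with
  | zero => simp [heights]
  | succ k =>
    rw [if_neg (by omega)]
    show heights ([a] ++ l) (k+1) = _
    rw [heights_append]
    simp [heights]
    cases a <;> simp <;> ring

lemma heights_dflip {w : List Bool} {j : ℕ} (h : Valley w j) (i : ℕ) :
    heights (dflip w j) i = heights w i + (if i = j + 1 then 2 else 0) := by
  conv_rhs => rw [valley_decomp h]
  rw [dflip, heights_append, heights_append]
  have hj1 : j + 1 < w.length := lt_length_of_getElem? h.2
  have hlt : (w.take j).length = j := by simp; omega
  rw [hlt]
  rw [heights_cons, heights_cons, heights_cons, heights_cons]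
  by_cases h0 : i - j = 0
  · rw [if_pos h0, if_pos h0, if_neg (show ¬ i = j + 1 by omega)]; (simp; try ring)
  · rw [if_neg h0, if_neg h0]
    by_cases h1 : i - j - 1 = 0
    · rw [if_pos h1, if_pos h1, if_pos (show i = j + 1 by omega)]; (simp; try ring)
    · rw [if_neg h1, if_neg h1, if_neg (show ¬ i = j + 1 by omega)]; (simp; try ring)

lemma isDyck_dflip {w : List Bool} {j : ℕ} (hd : IsDyck w) (h : Valley w j) :
    IsDyck (dflip w j) := by
  constructor
  · have := hd.1
    conv at this => rw [valley_decomp h]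
    rw [dflip]
    simp [List.count_append] at this ⊢
    omega
  · intro i _
    rw [heights_dflip h]
    have : 0 ≤ heights w i := by
      by_cases hi : i ≤ w.length
      · exact hd.2 i hi
      · have : heights w i = heights w w.length := by
          unfold heights; rw [List.take_of_length_le (by omega), List.take_length]
        rw [this]; exact hd.2 _ le_rfl
    split <;> omega

-- new material
lemma step_cases {w : List Bool} {i : ℕ} (hi : i < w.length) :
    (w[i]? = some true ∧ heights w (i + 1) = heights w i + 1) ∨
      (w[i]? = some false ∧ heights w (i + 1) = heights w i - 1) := by
  obtain ⟨b, hb⟩ : ∃ b, w[i]? = some b := ⟨w[i], List.getElem?_eq_getElem hi⟩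
  have := heights_step hb
  cases b
  · right; refine ⟨hb, ?_⟩; rw [this]; simp only [Bool.false_eq_true, if_false]; ring
  · left; refine ⟨hb, ?_⟩; rw [this]; simp

lemma dyckpath_ext {n : ℕ} {γ δ : DyckPath n} (h : γ.1.1 = δ.1.1) : γ = δ :=
  Subtype.ext (Subtype.ext h)

lemma word_len {n : ℕ} (γ : DyckPath n) : γ.1.1.length = 2 * n := γ.1.2

lemma heights_end {n : ℕ} (γ : DyckPath n) {i : ℕ} (h : 2 * n ≤ i) : heights γ.1.1 i = 0 := by
  have h1 : heights γ.1.1 i = heights γ.1.1 γ.1.1.length :=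
    heights_of_length_le (by rw [word_len]; omega)
  rw [h1]
  unfold heights
  rw [List.take_length]
  have := γ.2.1
  omega

lemma even_height_diff {n : ℕ} (γ δ : DyckPath n) {i : ℕ} (h : i ≤ 2 * n) :
    ∃ d : ℤ, heights δ.1.1 i - heights γ.1.1 i = 2 * d := by
  rw [heights_parity (by rw [word_len]; omega), heights_parity (by rw [word_len]; omega)]
  exact ⟨((δ.1.1.take i).count true : ℤ) - ((γ.1.1.take i).count true : ℤ), by ring⟩

def flipP {n : ℕ} (γ : DyckPath n) (j : ℕ) (h : Valley γ.1.1 j) : DyckPath n :=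
  ⟨⟨dflip γ.1.1 j, by rw [length_dflip h]; exact γ.1.2⟩, isDyck_dflip γ.2 h⟩

lemma flipP_word {n : ℕ} (γ : DyckPath n) (j : ℕ) (h : Valley γ.1.1 j) :
    (flipP γ j h).1.1 = dflip γ.1.1 j := rfl

lemma flipP_ne {n : ℕ} (γ : DyckPath n) (j : ℕ) (h : Valley γ.1.1 j) :
    γ ≠ flipP γ j h := by
  intro he
  have : heights γ.1.1 (j+1) = heights (flipP γ j h).1.1 (j+1) := by rw [← he]
  rw [flipP_word, heights_dflip h, if_pos rfl] at this
  omega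

lemma lt_flipP {n : ℕ} (γ : DyckPath n) (j : ℕ) (h : Valley γ.1.1 j) :
    DyckLT γ (flipP γ j h) := by
  refine ⟨fun i => ?_, flipP_ne γ j h⟩
  rw [flipP_word, heights_dflip h]
  split <;> omega

lemma flipP_inj {n : ℕ} (γ : DyckPath n) {j j' : ℕ} {h : Valley γ.1.1 j}
    {h' : Valley γ.1.1 j'} (he : flipP γ j h = flipP γ j' h') : j = j' := by
  by_contra hne
  have e1 : heights (flipP γ j h).1.1 (j+1) = heights (flipP γ j' h').1.1 (j+1) := by rw [he]
  rw [flipP_word, flipP_word, heights_dflip h, heights_dflip h', if_pos rfl,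
    if_neg (by omega)] at e1
  omega

lemma covby_flipP {n : ℕ} (γ : DyckPath n) (j : ℕ) (h : Valley γ.1.1 j) :
    DyckCovBy γ (flipP γ j h) := by
  refine ⟨lt_flipP γ j h, ?_⟩
  rintro δ ⟨hle1, hne1⟩ ⟨hle2, hne2⟩
  have hj1 : j + 1 < 2 * n := by
    have := lt_length_of_getElem? h.2; rwa [word_len] at this
  -- heights of δ agree with γ except possibly at j+1
  have key : ∀ i, i ≠ j + 1 → heights δ.1.1 i = heights γ.1.1 i := by
    intro i hi
    have h2 := hle2 i
    rw [flipP_word, heights_dflip h, if_neg hi] at h2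
    have h1 := hle1 i
    omega
  have hup := hle2 (j+1)
  rw [flipP_word, heights_dflip h, if_pos rfl] at hup
  obtain ⟨d, hd⟩ := even_height_diff γ δ (i := j + 1) (by omega)
  have hcase : heights δ.1.1 (j+1) = heights γ.1.1 (j+1) ∨
      heights δ.1.1 (j+1) = heights γ.1.1 (j+1) + 2 := by
    have := hle1 (j+1)
    omega
  rcases hcase with hc | hc
  · exact hne1 (dyckpath_ext (heights_ext (by rw [word_len, word_len])
      (fun i => by by_cases hi : i = j + 1
                   · rw [hi, hc]
                   · rw [key i hi])).symm).symm
  · refine hne2 (dyckpath_ext (heights_ext (by rw [word_len δ, word_len (flipP γ j h)]) ?_))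
    intro i
    rw [flipP_word, heights_dflip h]
    by_cases hi : i = j + 1
    · rw [hi, hc, if_pos rfl]
    · rw [key i hi, if_neg hi]; ring

lemma exists_flip_le {n : ℕ} {γ γ' : DyckPath n} (hlt : DyckLT γ γ') :
    ∃ (j : ℕ) (h : Valley γ.1.1 j), DyckLE (flipP γ j h) γ' := by
  classical
  have hne : ∃ i, heights γ.1.1 i ≠ heights γ'.1.1 i := by
    by_contra hc
    push_neg at hc
    exact hlt.2 (dyckpath_ext (heights_ext (by rw [word_len, word_len]) hc))
  obtain ⟨k, hkspec, hkmin⟩ : ∃ k, (heights γ.1.1 k ≠ heights γ'.1.1 k) ∧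
      ∀ i < k, heights γ.1.1 i = heights γ'.1.1 i :=
    ⟨Nat.find hne, Nat.find_spec hne, fun i hi => by
      by_contra hc
      exact absurd (Nat.find_le hc) (Nat.not_le.mpr hi)⟩
  have hklt : heights γ.1.1 k < heights γ'.1.1 k := lt_of_le_of_ne (hlt.1 k) hkspec
  have hk0 : 0 < k := by
    rcases Nat.eq_zero_or_pos k with h0 | h0
    · rw [h0, heights_zero, heights_zero] at hkspec; exact absurd rfl hkspec
    · exact h0
  have hkN : k < 2 * n := by
    by_contra hc
    push_neg at hc
    rw [heights_end γ (by omega), heights_end γ' (by omega)] at hkspec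
    exact hkspec rfl
  have hmex : ∃ m, k < m ∧ heights γ.1.1 m = heights γ'.1.1 m :=
    ⟨2 * n, hkN, by rw [heights_end γ le_rfl, heights_end γ' le_rfl]⟩
  obtain ⟨m, ⟨hkm, hmeq⟩, hmmin'⟩ : ∃ m, (k < m ∧ heights γ.1.1 m = heights γ'.1.1 m) ∧
      ∀ i < m, ¬(k < i ∧ heights γ.1.1 i = heights γ'.1.1 i) :=
    ⟨Nat.find hmex, Nat.find_spec hmex, fun i hi => Nat.find_min hmex hi⟩
  have hmmin : ∀ i, k ≤ i → i < m → heights γ.1.1 i < heights γ'.1.1 i := by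
    intro i h1 h2
    rcases eq_or_lt_of_le h1 with h3 | h3
    · rw [← h3]; exact hklt
    · refine lt_of_le_of_ne (hlt.1 i) fun hc => (hmmin' i h2) ⟨h3, hc⟩
  have hmN : m ≤ 2 * n := by
    by_contra hc
    push_neg at hc
    have := hmmin (2*n) (by omega) (by omega)
    rw [heights_end γ le_rfl, heights_end γ' le_rfl] at this
    exact absurd this (by omega)
  obtain ⟨j, hjmem, hjmin⟩ := Finset.exists_min_image (Finset.Icc k (m-1)) (heights γ.1.1)
    ⟨k, Finset.mem_Icc.mpr ⟨le_rfl, by omega⟩⟩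
  rw [Finset.mem_Icc] at hjmem
  obtain ⟨hjk, hjm⟩ := hjmem
  have hj0 : 0 < j := by omega
  have hjN : j < 2 * n := by omega
  have hlenw : γ.1.1.length = 2 * n := word_len γ
  have hlenw' : γ'.1.1.length = 2 * n := word_len γ'
  -- left step : w[j-1] = false
  have hleft : γ.1.1[j-1]? = some false ∧ heights γ.1.1 j = heights γ.1.1 (j-1) - 1 := by
    have hstep := step_cases (w := γ.1.1) (i := j - 1) (by omega)
    rw [show j - 1 + 1 = j by omega] at hstep
    have hge : heights γ.1.1 (j-1) ≥ heights γ.1.1 j := by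
      rcases eq_or_lt_of_le hjk with h3 | h3
      · -- j = k
        have e1 : heights γ.1.1 (j-1) = heights γ'.1.1 (j-1) := hkmin _ (by omega)
        have hstep' := step_cases (w := γ'.1.1) (i := j - 1) (by omega)
        rw [show j - 1 + 1 = j by omega] at hstep'
        have h4 : heights γ'.1.1 (j-1) ≥ heights γ'.1.1 j - 1 := by
          rcases hstep' with ⟨_, e⟩ | ⟨_, e⟩ <;> omega
        have h5 : heights γ'.1.1 j > heights γ.1.1 j := hmmin j hjk (by omega)
        omega
      · exact hjmin (j-1) (Finset.mem_Icc.mpr ⟨by omega, by omega⟩)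
    rcases hstep with ⟨_, e⟩ | ⟨he, e⟩
    · omega
    · exact ⟨he, e⟩
  -- right step : w[j] = true
  have hright : γ.1.1[j]? = some true ∧ heights γ.1.1 (j+1) = heights γ.1.1 j + 1 := by
    have hstep := step_cases (w := γ.1.1) (i := j) (by omega)
    have hge : heights γ.1.1 (j+1) ≥ heights γ.1.1 j := by
      by_cases h3 : j < m - 1
      · exact hjmin (j+1) (Finset.mem_Icc.mpr ⟨by omega, by omega⟩)
      · have hjm1 : j + 1 = m := by omega
        have hstep' := step_cases (w := γ'.1.1) (i := j) (by omega)
        have h4 : heights γ'.1.1 (j+1) ≥ heights γ'.1.1 j - 1 := by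
          rcases hstep' with ⟨_, e⟩ | ⟨_, e⟩ <;> omega
        have h5 : heights γ'.1.1 j > heights γ.1.1 j := hmmin j hjk (by omega)
        rw [hjm1] at h4 ⊢
        rw [← hmeq] at h4
        omega
    rcases hstep with ⟨he, e⟩ | ⟨_, e⟩
    · exact ⟨he, e⟩
    · omega
  have hval : Valley γ.1.1 (j-1) := by
    refine ⟨hleft.1, ?_⟩
    rw [show j - 1 + 1 = j by omega]
    exact hright.1
  refine ⟨j - 1, hval, fun i => ?_⟩
  rw [flipP_word, heights_dflip hval, show j - 1 + 1 = j by omega]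
  by_cases hi : i = j
  · rw [if_pos hi, hi]
    obtain ⟨d, hd⟩ := even_height_diff γ γ' (i := j) (by omega)
    have := hmmin j hjk (by omega)
    omega
  · rw [if_neg hi]
    have := hlt.1 i
    omega

lemma covby_iff {n : ℕ} {γ δ : DyckPath n} :
    DyckCovBy γ δ ↔ ∃ (j : ℕ) (h : Valley γ.1.1 j), δ = flipP γ j h := by
  constructor
  · rintro ⟨hlt, hmax⟩
    obtain ⟨j, hval, hle⟩ := exists_flip_le hlt
    refine ⟨j, hval, ?_⟩
    by_contra hne
    exact hmax (flipP γ j hval) (lt_flipP γ j hval) ⟨hle, fun he => hne he.symm⟩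
  · rintro ⟨j, hval, rfl⟩
    exact covby_flipP γ j hval

def VS (w : List Bool) : Finset ℕ :=
  (Finset.range w.length).filter fun i => [false, true] <+: w.drop i

lemma mem_VS {w : List Bool} {i : ℕ} : i ∈ VS w ↔ Valley w i := by
  unfold VS Valley
  rw [Finset.mem_filter, Finset.mem_range, pair_prefix_drop_iff]
  exact ⟨fun h => h.2, fun h => ⟨lt_length_of_getElem? h.1, h⟩⟩

lemma valley_dflip_iff {w : List Bool} {j : ℕ} (hj : Valley w j) (i : ℕ) :
    Valley (dflip w j) i ↔
      ((Valley w i ∧ (i + 2 ≤ j ∨ j + 2 ≤ i)) ∨ (i + 1 = j ∧ w[i]? = some false) ∨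
        (i = j + 1 ∧ w[j + 2]? = some true)) := by
  unfold Valley
  rw [getElem?_dflip hj, getElem?_dflip hj]
  by_cases h1 : i = j
  · subst h1
    rw [if_pos rfl]
    constructor
    · rintro ⟨h, _⟩; exact absurd h (by simp)
    · rintro (⟨_, h⟩ | ⟨h, _⟩ | ⟨h, _⟩) <;> omega
  · rw [if_neg h1]
    by_cases h2 : i = j + 1
    · subst h2
      rw [if_pos rfl, if_neg (by omega), if_neg (by omega), show j + 1 + 1 = j + 2 by omega]
      constructor
      · rintro ⟨_, h⟩; exact Or.inr (Or.inr ⟨rfl, h⟩)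
      · rintro (⟨_, h⟩ | ⟨h, _⟩ | ⟨_, h⟩)
        · exact absurd h (by omega)
        · exact absurd h (by omega)
        · exact ⟨rfl, h⟩
    · rw [if_neg h2]
      by_cases h3 : i + 1 = j
      · rw [if_pos h3]
        constructor
        · rintro ⟨h, _⟩; exact Or.inr (Or.inl ⟨h3, h⟩)
        · rintro (⟨_, h⟩ | ⟨_, h⟩ | ⟨h, _⟩)
          · exact absurd h (by omega)
          · exact ⟨h, rfl⟩
          · exact absurd h (by omega)
      · rw [if_neg h3, if_neg (by omega)]
        constructor
        · rintro ⟨ha, hb⟩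
          exact Or.inl ⟨⟨ha, hb⟩, by omega⟩
        · rintro (⟨h, _⟩ | ⟨h, _⟩ | ⟨h, _⟩)
          · exact h
          · exact absurd h (by omega)
          · exact absurd h (by omega)

lemma VS_dflip_eq {w : List Bool} {j : ℕ} (hj : Valley w j) :
    VS (dflip w j) =
      ((VS w).filter fun i => i + 2 ≤ j ∨ j + 2 ≤ i)
        ∪ ((Finset.range w.length).filter fun i => i + 1 = j ∧ [false, false, true] <+: w.drop i)
        ∪ ((Finset.range w.length).filter fun i => i = j + 1 ∧ [false, true, true] <+: w.drop j) := by
  ext i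
  rw [mem_VS, valley_dflip_iff hj]
  simp only [Finset.mem_union, Finset.mem_filter, Finset.mem_range, mem_VS,
    triple_prefix_drop_iff]
  constructor
  · rintro (⟨h, ha⟩ | ⟨h1, h2⟩ | ⟨h1, h2⟩)
    · exact Or.inl (Or.inl ⟨h, ha⟩)
    · refine Or.inl (Or.inr ⟨lt_length_of_getElem? h2, h1, h2, ?_, ?_⟩)
      · rw [show i + 1 = j from h1]; exact hj.1
      · rw [show i + 2 = j + 1 by omega]; exact hj.2
    · refine Or.inr ⟨?_, h1, hj.1, hj.2, h2⟩
      have := lt_length_of_getElem? h2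
      omega
  · rintro ((⟨h, ha⟩ | ⟨_, h1, h2, _, _⟩) | ⟨_, h1, _, _, h2⟩)
    · exact Or.inl ⟨h, ha⟩
    · exact Or.inr (Or.inl ⟨h1, h2⟩)
    · exact Or.inr (Or.inr ⟨h1, h2⟩)

lemma card_VS_dflip {w : List Bool} {j : ℕ} (hj : Valley w j) :
    (VS (dflip w j)).card =
      ((VS w).filter fun i => i + 2 ≤ j ∨ j + 2 ≤ i).card
        + ((Finset.range w.length).filter fun i =>
            i + 1 = j ∧ [false, false, true] <+: w.drop i).card
        + ((Finset.range w.length).filter fun i =>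
            i = j + 1 ∧ [false, true, true] <+: w.drop j).card := by
  rw [VS_dflip_eq hj]
  have d1 : Disjoint ((VS w).filter fun i => i + 2 ≤ j ∨ j + 2 ≤ i)
      ((Finset.range w.length).filter fun i =>
        i + 1 = j ∧ [false, false, true] <+: w.drop i) := by
    rw [Finset.disjoint_left]
    intro a ha hb
    rw [Finset.mem_filter] at ha hb
    omega
  have d2 : Disjoint
      (((VS w).filter fun i => i + 2 ≤ j ∨ j + 2 ≤ i)
        ∪ ((Finset.range w.length).filter fun i =>
            i + 1 = j ∧ [false, false, true] <+: w.drop i))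
      ((Finset.range w.length).filter fun i =>
        i = j + 1 ∧ [false, true, true] <+: w.drop j) := by
    rw [Finset.disjoint_left]
    intro a ha hb
    rw [Finset.mem_union, Finset.mem_filter, Finset.mem_filter] at ha
    rw [Finset.mem_filter] at hb
    rcases ha with ⟨_, h2⟩ | ⟨_, h1, _⟩ <;> omega
  rw [Finset.card_union_of_disjoint d2, Finset.card_union_of_disjoint d1]

lemma card_filter_product {s t : Finset ℕ} (P : ℕ → ℕ → Prop) [∀ a b : ℕ, Decidable (P a b)] :
    ((s ×ˢ t).filter fun p => P p.1 p.2).card = ∑ a ∈ s, (t.filter fun b => P a b).card := by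
  rw [Finset.card_filter, Finset.sum_product]
  simp_rw [Finset.card_filter]

lemma sum_A (w : List Bool) :
    ∑ j ∈ VS w, ((VS w).filter fun i => i + 2 ≤ j ∨ j + 2 ≤ i).card = 2 * valleyPairs w := by
  rw [← card_filter_product fun j i => i + 2 ≤ j ∨ j + 2 ≤ i]
  have e1 : ((VS w ×ˢ VS w).filter fun p => p.2 + 2 ≤ p.1 ∨ p.1 + 2 ≤ p.2)
      = ((VS w ×ˢ VS w).filter fun p => p.2 + 2 ≤ p.1)
        ∪ ((VS w ×ˢ VS w).filter fun p => p.1 + 2 ≤ p.2) := Finset.filter_or _ _ _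
  have e2 : ((VS w ×ˢ VS w).filter fun p => (fun j i => i + 2 ≤ j ∨ j + 2 ≤ i) p.1 p.2)
      = ((VS w ×ˢ VS w).filter fun p => p.2 + 2 ≤ p.1 ∨ p.1 + 2 ≤ p.2) := rfl
  rw [e2, e1, Finset.card_union_of_disjoint (by
    rw [Finset.disjoint_left]
    intro a ha hb
    rw [Finset.mem_filter] at ha hb
    omega)]
  have swap_eq : ((VS w ×ˢ VS w).filter fun p => p.2 + 2 ≤ p.1).card
      = ((VS w ×ˢ VS w).filter fun p => p.1 + 2 ≤ p.2).card := by
    apply Finset.card_bij' (fun p _ => Prod.swap p) (fun p _ => Prod.swap p)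
    · intro p hp
      rw [Finset.mem_filter, Finset.mem_product] at hp ⊢
      exact ⟨⟨hp.1.2, hp.1.1⟩, hp.2⟩
    · intro p hp
      rw [Finset.mem_filter, Finset.mem_product] at hp ⊢
      exact ⟨⟨hp.1.2, hp.1.1⟩, hp.2⟩
    · intro p _; rfl
    · intro p _; rfl
  have vp : ((VS w ×ˢ VS w).filter fun p => p.1 + 2 ≤ p.2).card = valleyPairs w := by
    unfold valleyPairs
    congr 1
    ext p
    simp only [Finset.mem_filter, Finset.mem_product, VS, Finset.mem_range]
    tauto
  omega

lemma sum_B (w : List Bool) :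
    ∑ j ∈ VS w, ((Finset.range w.length).filter fun i =>
        i + 1 = j ∧ [false, false, true] <+: w.drop i).card
      = occ [false, false, true] w := by
  rw [← Finset.card_biUnion (by
    intro x hx y hy hne
    rw [Function.onFun, Finset.disjoint_left]
    intro a ha hb
    rw [Finset.mem_filter] at ha hb
    omega)]
  unfold occ
  congr 1
  ext i
  simp only [Finset.mem_biUnion, Finset.mem_filter, Finset.mem_range]
  constructor
  · rintro ⟨j, hj, hi, _, hp⟩; exact ⟨hi, hp⟩
  · rintro ⟨hi, hp⟩
    refine ⟨i + 1, mem_VS.mpr ?_, hi, rfl, hp⟩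
    rw [triple_prefix_drop_iff] at hp
    exact ⟨hp.2.1, hp.2.2⟩

lemma sum_C (w : List Bool) :
    ∑ j ∈ VS w, ((Finset.range w.length).filter fun i =>
        i = j + 1 ∧ [false, true, true] <+: w.drop j).card
      = occ [false, true, true] w := by
  have step : ∀ j ∈ VS w, ((Finset.range w.length).filter fun i =>
      i = j + 1 ∧ [false, true, true] <+: w.drop j).card
      = if [false, true, true] <+: w.drop j then 1 else 0 := by
    intro j hj
    rw [mem_VS] at hj
    have hj1 : j + 1 < w.length := lt_length_of_getElem? hj.2
    by_cases hq : [false, true, true] <+: w.drop j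
    · rw [if_pos hq]
      have e : ((Finset.range w.length).filter fun i =>
          i = j + 1 ∧ [false, true, true] <+: w.drop j) = {j + 1} := by
        ext i
        simp only [Finset.mem_filter, Finset.mem_range, Finset.mem_singleton, hq, and_true]
        exact ⟨fun h => h.2, fun h => ⟨by omega, h⟩⟩
      rw [e, Finset.card_singleton]
    · rw [if_neg hq]
      convert Finset.card_empty
      ext i
      simp only [Finset.mem_filter, Finset.notMem_empty, iff_false, not_and]
      intro _ _
      exact hq
  rw [Finset.sum_congr rfl step, ← Finset.card_filter]
  unfold occ
  congr 1
  ext i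
  simp only [VS, Finset.filter_filter, Finset.mem_filter, Finset.mem_range]
  constructor
  · rintro ⟨h1, _, h2⟩; exact ⟨h1, h2⟩
  · rintro ⟨h1, h2⟩
    exact ⟨h1, (show [false, true] <+: [false, true, true] from ⟨[true], rfl⟩).trans h2, h2⟩

lemma sum_VS_dflip (w : List Bool) :
    ∑ j ∈ VS w, (VS (dflip w j)).card
      = 2 * valleyPairs w + occ [false, false, true] w + occ [false, true, true] w := by
  rw [Finset.sum_congr rfl (fun j hj => card_VS_dflip (mem_VS.mp hj)),
    Finset.sum_add_distrib, Finset.sum_add_distrib, sum_A, sum_B, sum_C]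

-- ====== new material ======

lemma flipP_congr {n : ℕ} {γ γ' : DyckPath n} (e : γ = γ') {j : ℕ} (h : Valley γ.1.1 j)
    (h' : Valley γ'.1.1 j) : flipP γ j h = flipP γ' j h' := by subst e; rfl

def ChainData (n : ℕ) : Type :=
  Σ γ : DyckPath n, Σ j : {j : ℕ // j ∈ VS γ.1.1}, {i : ℕ // i ∈ VS (dflip γ.1.1 j.1)}

instance (n : ℕ) : Fintype (ChainData n) := by unfold ChainData; infer_instance

def FF {n : ℕ} (t : ChainData n) : SatChain n 2 := by
  refine ⟨![t.1, flipP t.1 t.2.1.1 (mem_VS.mp t.2.1.2),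
    flipP (flipP t.1 t.2.1.1 (mem_VS.mp t.2.1.2)) t.2.2.1 (mem_VS.mp t.2.2.2)], ?_⟩
  intro i
  fin_cases i
  · exact covby_flipP t.1 t.2.1.1 (mem_VS.mp t.2.1.2)
  · exact covby_flipP (flipP t.1 t.2.1.1 (mem_VS.mp t.2.1.2)) t.2.2.1 (mem_VS.mp t.2.2.2)

lemma FF_bijective {n : ℕ} : Function.Bijective (FF (n := n)) := by
  constructor
  · rintro ⟨γ, ⟨j, hj⟩, ⟨i, hi⟩⟩ ⟨γ', ⟨j', hj'⟩, ⟨i', hi'⟩⟩ h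
    have hfun := congrArg Subtype.val h
    have e0 : γ = γ' := congrFun hfun 0
    subst e0
    have e1 : flipP γ j (mem_VS.mp hj) = flipP γ j' (mem_VS.mp hj') := congrFun hfun 1
    have ej : j = j' := flipP_inj γ e1
    subst ej
    have e2 : flipP (flipP γ j (mem_VS.mp hj)) i (mem_VS.mp hi)
        = flipP (flipP γ j (mem_VS.mp hj)) i' (mem_VS.mp hi') := congrFun hfun 2
    have ei : i = i' := flipP_inj _ e2
    subst ei
    rfl
  · rintro ⟨c, hc⟩
    have h0 : DyckCovBy (c 0) (c 1) := hc 0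
    have h1 : DyckCovBy (c 1) (c 2) := hc 1
    obtain ⟨j, hj, e1⟩ := covby_iff.mp h0
    obtain ⟨i, hi, e2⟩ := covby_iff.mp h1
    have hi' : i ∈ VS (dflip (c 0).1.1 j) := mem_VS.mpr (by rw [e1] at hi; exact hi)
    refine ⟨⟨c 0, ⟨j, mem_VS.mpr hj⟩, ⟨i, hi'⟩⟩, ?_⟩
    apply Subtype.ext
    funext x
    fin_cases x
    · rfl
    · exact e1.symm
    · show flipP (flipP (c 0) j (mem_VS.mp (mem_VS.mpr hj))) i (mem_VS.mp hi') = c 2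
      have : flipP (flipP (c 0) j (mem_VS.mp (mem_VS.mpr hj))) i (mem_VS.mp hi')
          = flipP (c 1) i hi := flipP_congr e1.symm _ _
      rw [this, ← e2]

/-- The number of saturated chains of length 2 in `D_n` equals the sum over all Dyck paths
`γ` of semilength `n` of `2·#(du,du)_γ + #(ddu)_γ + #(duu)_γ`. -/
theorem dyck_sc2_combinatorial (n : ℕ) :
    Nat.card (SatChain n 2) =
      ∑ γ : DyckPath n,
        (2 * valleyPairs γ.1.1 + occ [false, false, true] γ.1.1 + occ [false, true, true] γ.1.1) := by
  rw [Nat.card_congr (Equiv.ofBijective (FF (n := n)) FF_bijective).symm,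
    Nat.card_eq_fintype_card]
  unfold ChainData
  rw [Fintype.card_sigma]
  refine Finset.sum_congr rfl fun γ _ => ?_
  rw [Fintype.card_sigma, ← sum_VS_dflip γ.1.1, ← Finset.sum_coe_sort (VS γ.1.1)]
  refine Finset.sum_congr rfl fun j _ => ?_
  rw [Fintype.card_coe]
end

section
/- The factors ddu and duu are equidistributed over Dyck paths: for every n and k, the number of Dyck paths of semilength n with exactly k occurrences of the factor ddu equals the number of Dyck paths of semilength n with exactly k occurrences of the factor duu. -/
/-- Reverse–complement of a word. -/
def rc (w : List Bool) : List Bool := (w.map not).reverse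

@[simp] lemma rc_length (w : List Bool) : (rc w).length = w.length := by simp [rc]

@[simp] lemma rc_rc (w : List Bool) : rc (rc w) = w := by
  simp [rc, List.map_reverse, List.map_map, Function.comp_def, Bool.not_not]

lemma rc_append (a b : List Bool) : rc (a ++ b) = rc b ++ rc a := by
  simp [rc]

lemma count_map_not (l : List Bool) (b : Bool) : (l.map not).count b = l.count (!b) := by
  have := List.count_map_of_injective l not (fun a b h => by simpa using h) (!b)
  simpa using this

@[simp] lemma rc_count (w : List Bool) (b : Bool) : (rc w).count b = w.count (!b) := by
  simp [rc, count_map_not]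

lemma count_take_drop (l : List Bool) (j : ℕ) (b : Bool) :
    (l.take j).count b + (l.drop j).count b = l.count b := by
  rw [← List.count_append, List.take_append_drop]

lemma heights_rc (w : List Bool) (hc : w.count true = w.count false) (i : ℕ) :
    heights (rc w) i = heights w (w.length - i) := by
  unfold heights
  have h1 : (rc w).take i = ((w.drop (w.length - i)).map not).reverse := by
    rw [rc, List.take_reverse, List.length_map, List.map_drop]
  rw [h1]
  have hT := count_take_drop w (w.length - i) true
  have hF := count_take_drop w (w.length - i) false
  simp only [List.count_reverse, count_map_not, Bool.not_true, Bool.not_false]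
  omega

lemma rc_isDyck {w : List Bool} (h : IsDyck w) : IsDyck (rc w) := by
  obtain ⟨hc, hh⟩ := h
  refine ⟨by simp [hc], fun i hi => ?_⟩
  rw [heights_rc w hc i]
  exact hh _ (Nat.sub_le _ _)

lemma prefix_rc {f w : List Bool} {i : ℕ} (hf : f ≠ []) (h : f <+: w.drop i) :
    rc f <+: (rc w).drop (w.length - f.length - i) := by
  obtain ⟨t, ht⟩ := h
  have ht : w.drop i = f ++ t := ht.symm
  have hlen : (w.drop i).length = f.length + t.length := by rw [ht]; simp
  have hiw : i ≤ w.length := by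
    by_contra hgt
    rw [List.drop_eq_nil_of_le (le_of_lt (lt_of_not_ge hgt))] at ht
    exact hf (List.append_eq_nil_iff.mp ht.symm).1
  have hw : w = w.take i ++ f ++ t := by
    rw [List.append_assoc, ← ht, List.take_append_drop]
  have hrc : rc w = rc t ++ (rc f ++ rc (w.take i)) := by
    conv_lhs => rw [hw]
    rw [rc_append, rc_append]
  have hdrop : (rc w).drop t.length = rc f ++ rc (w.take i) := by
    rw [hrc]
    have : t.length = (rc t).length := (rc_length t).symm
    rw [this, List.drop_left]
  have hts : w.length - f.length - i = t.length := by
    rw [List.length_drop] at hlen; omega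
  rw [hts, hdrop]
  exact ⟨rc (w.take i), rfl⟩

lemma prefix_length_le {f w : List Bool} {i : ℕ} (hf : f ≠ []) (h : f <+: w.drop i)
    (hi : i < w.length) : i + f.length ≤ w.length := by
  have := h.length_le
  rw [List.length_drop] at this
  omega

lemma occ_rc (f w : List Bool) (hf : f ≠ []) : occ f w = occ (rc f) (rc w) := by
  unfold occ
  refine Finset.card_bij (fun i _ => w.length - f.length - i) ?_ ?_ ?_
  · intro i hi
    simp only [Finset.mem_filter, Finset.mem_range] at hi ⊢
    obtain ⟨hir, hip⟩ := hi
    have hle := prefix_length_le hf hip hir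
    have hf1 : 1 ≤ f.length := List.length_pos_iff.mpr hf
    exact ⟨by rw [rc_length]; omega, prefix_rc hf hip⟩
  · intro i1 h1 i2 h2 heq
    simp only [Finset.mem_filter, Finset.mem_range] at h1 h2
    have l1 := prefix_length_le hf h1.2 h1.1
    have l2 := prefix_length_le hf h2.2 h2.1
    omega
  · intro j hj
    simp only [Finset.mem_filter, Finset.mem_range] at hj
    obtain ⟨hjr, hjp⟩ := hj
    rw [rc_length] at hjr
    have hle : j + f.length ≤ w.length := by
      have := prefix_length_le (f := rc f) (w := rc w) (by simp [rc, hf]) hjp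
        (by rw [rc_length]; exact hjr)
      simpa using this
    have hf1 : 1 ≤ f.length := List.length_pos_iff.mpr hf
    refine ⟨w.length - f.length - j, ?_, ?_⟩
    · simp only [Finset.mem_filter, Finset.mem_range]
      constructor
      · omega
      · have := prefix_rc (f := rc f) (w := rc w) (by simp [rc, hf]) hjp
        rw [rc_rc, rc_rc, rc_length, rc_length] at this
        exact this
    · show w.length - f.length - (w.length - f.length - j) = j
      omega

/-- Reverse–complement as a map on Dyck paths. -/
def rcD {n : ℕ} (γ : DyckPath n) : DyckPath n :=
  ⟨⟨rc γ.1.1, by rw [rc_length, γ.1.2]⟩, rc_isDyck γ.2⟩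

@[simp] lemma rcD_rcD {n : ℕ} (γ : DyckPath n) : rcD (rcD γ) = γ := by
  unfold rcD
  apply Subtype.ext
  apply Subtype.ext
  simp

lemma rc_ddu : rc [false, false, true] = [false, true, true] := by decide

lemma rc_duu : rc [false, true, true] = [false, false, true] := by decide

/-- The factors `ddu` and `duu` are equidistributed over Dyck paths. -/
theorem ddu_duu_equidistributed (n k : ℕ) :
    Nat.card {γ : DyckPath n // occ [false, false, true] γ.1.1 = k} =
      Nat.card {γ : DyckPath n // occ [false, true, true] γ.1.1 = k} := by
  refine Nat.card_congr ⟨fun γ => ⟨rcD γ.1, ?_⟩, fun γ => ⟨rcD γ.1, ?_⟩, fun γ => ?_, fun γ => ?_⟩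
  · have h := occ_rc [false, false, true] (γ.1).1.1 (by decide)
    rw [rc_ddu] at h
    show occ [false, true, true] (rc (γ.1).1.1) = k
    rw [← h]; exact γ.2
  · have h := occ_rc [false, true, true] (γ.1).1.1 (by decide)
    rw [rc_duu] at h
    show occ [false, false, true] (rc (γ.1).1.1) = k
    rw [← h]; exact γ.2
  · exact Subtype.ext (rcD_rcD γ.1)
  · exact Subtype.ext (rcD_rcD γ.1)
end

section
/- Similarly, the factors dddu and duuu are equidistributed over Dyck paths: for every n and k, the number of Dyck paths of semilength n with exactly k occurrences of dddu equals the number with exactly k occurrences of duuu. -/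
def revcomp (w : List Bool) : List Bool := (w.map not).reverse

lemma revcomp_revcomp (w : List Bool) : revcomp (revcomp w) = w := by
  simp [revcomp, List.map_reverse, List.map_map, Function.comp_def, Bool.not_not]

lemma length_revcomp (w : List Bool) : (revcomp w).length = w.length := by
  simp [revcomp]

lemma count_not_map (w : List Bool) (b : Bool) :
    (w.map not).count b = w.count (!b) := by
  have := List.count_map_of_injective w not (fun x y => by cases x <;> cases y <;> simp) (!b)
  simpa using this

lemma heights_revcomp (w : List Bool) (hw : w.count true = w.count false)
    (i : ℕ) : heights (revcomp w) i = heights w (w.length - i) := by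
  unfold heights revcomp
  rw [List.take_reverse]
  simp only [List.count_reverse, List.length_map]
  rw [← List.map_drop, count_not_map, count_not_map]
  simp only [Bool.not_true, Bool.not_false]
  have h1 : w.count true = (w.take (w.length - i)).count true + (w.drop (w.length - i)).count true := by
    rw [← List.count_append, List.take_append_drop]
  have h2 : w.count false = (w.take (w.length - i)).count false + (w.drop (w.length - i)).count false := by
    rw [← List.count_append, List.take_append_drop]
  omega

lemma isDyck_revcomp {w : List Bool} (hw : IsDyck w) : IsDyck (revcomp w) := by
  obtain ⟨h1, h2⟩ := hw
  constructor
  · simp [revcomp, count_not_map, h1]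
  · intro i hi
    rw [heights_revcomp w h1]
    exact h2 _ (Nat.sub_le _ _)

lemma occ_le_revcomp (f w : List Bool) (hf : f ≠ []) :
    occ f w ≤ occ (revcomp f) (revcomp w) := by
  apply Finset.card_le_card_of_injOn (fun i => w.length - f.length - i)
  · intro i hi
    simp only [Finset.mem_coe, Finset.mem_filter, Finset.mem_range] at hi ⊢
    obtain ⟨hi1, hi2⟩ := hi
    have hlen : f.length + i ≤ w.length := by
      have := hi2.length_le
      rw [List.length_drop] at this
      omega
    have hfpos : 0 < f.length := List.length_pos_iff.mpr hf
    refine ⟨by rw [length_revcomp]; omega, ?_⟩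
    show (f.map not).reverse <+: ((w.map not).reverse).drop _
    rw [List.drop_reverse, List.reverse_prefix, List.length_map]
    have : w.length - (w.length - f.length - i) = i + f.length := by omega
    rw [this, ← List.map_take]
    apply List.IsSuffix.map
    obtain ⟨r, hr⟩ := hi2
    have hw' : w = w.take i ++ (f ++ r) := by rw [hr, List.take_append_drop]
    have htl : (w.take i).length = i := by rw [List.length_take]; omega
    have hkey : w.take (i + f.length) = w.take i ++ f := by
      calc w.take (i + f.length)
          = (w.take i ++ (f ++ r)).take ((w.take i).length + f.length) := by
            rw [← hw', htl]
        _ = w.take i ++ (f ++ r).take f.length := by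
            rw [List.take_append, List.take_of_length_le (l := w.take i) (by omega), Nat.add_sub_cancel_left]
        _ = w.take i ++ f := by rw [List.take_left]
    rw [hkey]
    exact List.suffix_append _ _
  · intro a ha b hb hab
    simp only [Finset.mem_coe, Finset.mem_filter, Finset.mem_range] at ha hb
    have h1 := ha.2.length_le
    have h2 := hb.2.length_le
    rw [List.length_drop] at h1 h2
    simp only at hab
    omega

lemma occ_revcomp (f w : List Bool) (hf : f ≠ []) :
    occ f w = occ (revcomp f) (revcomp w) := by
  refine le_antisymm (occ_le_revcomp f w hf) ?_
  have h := occ_le_revcomp (revcomp f) (revcomp w) (by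
    simp [revcomp]; exact fun h => hf (by simpa using congrArg List.length h))
  rwa [revcomp_revcomp, revcomp_revcomp] at h


def revPath {n : ℕ} (γ : DyckPath n) : DyckPath n :=
  ⟨⟨revcomp γ.1.1, by rw [length_revcomp, γ.1.2]⟩, isDyck_revcomp γ.2⟩

lemma revPath_revPath {n : ℕ} (γ : DyckPath n) : revPath (revPath γ) = γ :=
  Subtype.ext (Subtype.ext (revcomp_revcomp γ.1.1))

/-- The factors `dddu` and `duuu` are equidistributed over Dyck paths. -/
theorem dddu_duuu_equidistributed (n k : ℕ) :
    Nat.card {γ : DyckPath n // occ [false, false, false, true] γ.1.1 = k} =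
      Nat.card {γ : DyckPath n // occ [false, true, true, true] γ.1.1 = k} := by
  apply Nat.card_congr
  have key : ∀ w : List Bool, occ [false, false, false, true] w = occ [false, true, true, true] (revcomp w) := by
    intro w
    have := occ_revcomp [false, false, false, true] w (by simp)
    simpa [revcomp] using this
  have key2 : ∀ w : List Bool, occ [false, true, true, true] w = occ [false, false, false, true] (revcomp w) := by
    intro w
    have := occ_revcomp [false, true, true, true] w (by simp)
    simpa [revcomp] using this
  refine ⟨fun γ => ⟨revPath γ.1, by show occ _ (revcomp _) = _; rw [← key]; exact γ.2⟩,
         fun γ => ⟨revPath γ.1, by show occ _ (revcomp _) = _; rw [← key2]; exact γ.2⟩, ?_, ?_⟩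
  · intro γ; exact Subtype.ext (revPath_revPath γ.1)
  · intro γ; exact Subtype.ext (revPath_revPath γ.1)
end
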